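/- For each k ≥ 1, the map j_k is an order embedding for the dominance-type order on pairs of partitions: for pairs of partitions τ, τ' with |τ| = |τ'|, one has τ ≤ τ' if and only if j_k(τ) ≤ j_k(τ'). -/

import Mathlib

open Finset

/-- A partition: weakly decreasing, finitely supported sequence of naturals (0-indexed). -/
def IsPartition (μ : ℕ → ℕ) : Prop :=
  Antitone μ ∧ ∃ N, ∀ i, N ≤ i → μ i = 0

/-- Membership in `P_2(n)`: a pair of partitions of total size `n`. -/
def PairP2 (n : ℕ) (p : (ℕ → ℕ) × (ℕ → ℕ)) : Prop :=
  IsPartition p.1 ∧ IsPartition p.2 ∧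
    ∃ N, (∀ i, N ≤ i → p.1 i = 0 ∧ p.2 i = 0) ∧
      (∑ i ∈ range N, (p.1 i + p.2 i)) = n

/-- The dominance-type order on pairs of partitions (0-indexed: `p.1 0` is `μ_1`). -/
def PairLE (p q : (ℕ → ℕ) × (ℕ → ℕ)) : Prop :=
  (∀ j, ∑ i ∈ range j, (p.1 i + p.2 i) ≤ ∑ i ∈ range j, (q.1 i + q.2 i)) ∧
  (∀ j, (∑ i ∈ range j, (p.1 i + p.2 i)) + p.1 j ≤
        (∑ i ∈ range j, (q.1 i + q.2 i)) + q.1 j)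

/-- Add 1 to the first `m` entries of a sequence. -/
def bump (m : ℕ) (μ : ℕ → ℕ) : ℕ → ℕ := fun i => if i < m then μ i + 1 else μ i

/-- The map `j_k` on pairs of partitions. -/
def jmap (k : ℕ) (p : (ℕ → ℕ) × (ℕ → ℕ)) : (ℕ → ℕ) × (ℕ → ℕ) :=
  (bump ((k + 1) / 2) p.1, bump (k / 2) p.2)

lemma sum_bump_pair (a b : ℕ) (f g : ℕ → ℕ) (j : ℕ) :
    ∑ i ∈ range j, (bump a f i + bump b g i)
      = (∑ i ∈ range j, (f i + g i)) + (min j a + min j b) := by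
  induction j with
  | zero => simp
  | succ j ih =>
    rw [Finset.sum_range_succ, Finset.sum_range_succ, ih]
    simp only [bump]
    split_ifs <;> omega

/-- for `k ≥ 1`, `j_k` is an order embedding for the dominance-type
order on pairs of partitions of the same total size. -/
theorem jmap_orderEmbedding (k n : ℕ) (hk : 1 ≤ k)
    (p q : (ℕ → ℕ) × (ℕ → ℕ)) (hp : PairP2 n p) (hq : PairP2 n q) :
    PairLE p q ↔ PairLE (jmap k p) (jmap k q) := by
  unfold PairLE jmap
  simp only [sum_bump_pair]
  constructor
  · rintro ⟨h1, h2⟩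
    refine ⟨fun j => by have := h1 j; omega, fun j => ?_⟩
    have := h2 j
    unfold bump
    split <;> omega
  · rintro ⟨h1, h2⟩
    refine ⟨fun j => by have := h1 j; omega, fun j => ?_⟩
    have := h2 j
    unfold bump at this
    split at this <;> omega
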